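/- Let F be a fixed graph, G a graph, and k a nonnegative integer. Let v_1, …, v_p be pairwise false twins of G with p = |V(F)| + k + 1, and let G' = G − v_p. Then G has a spanning subgraph satisfying the F-closure with at least k edges if and only if G' has a spanning subgraph satisfying the F-closure with at least k edges. -/

import Mathlib

open SimpleGraph

/-- A spanning subgraph `H` of `G` *satisfies the `F`-closure* if for every vertex subset `S`
such that `H[S]` is isomorphic to `F`, the induced subgraph `G[S]` is not isomorphic to `F`. -/
def SatisfiesClosure {V W : Type*} (G H : SimpleGraph V) (F : SimpleGraph W) : Prop :=
  ∀ S : Set V, Nonempty ((H.induce S) ≃g F) → ¬ Nonempty ((G.induce S) ≃g F)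

/-- Transport of induced subgraphs along an equivalence of vertex sets that preserves
adjacency. -/
def induceIsoInduce {α β : Type*} {K : SimpleGraph α} {L : SimpleGraph β}
    {A : Set α} {B : Set β} (e : A ≃ B)
    (h : ∀ x y : A, L.Adj ↑(e x) ↑(e y) ↔ K.Adj ↑x ↑y) :
    K.induce A ≃g L.induce B :=
  ⟨e, by intro a b; simpa using h a b⟩

/-- The preimage of a subset under the subtype coercion is equivalent to the set itself. -/
def preimageEquiv {α : Type*} {T : Set α} (B : Set α) (hB : B ⊆ T) :
    (Subtype.val ⁻¹' B : Set T) ≃ B :=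
  { toFun := fun x => ⟨↑↑x, x.2⟩
    invFun := fun y => ⟨⟨↑y, hB y.2⟩, y.2⟩
    left_inv := fun x => rfl
    right_inv := fun y => rfl }

@[simp] lemma preimageEquiv_coe {α : Type*} {T : Set α} (B : Set α) (hB : B ⊆ T)
    (x : (Subtype.val ⁻¹' B : Set T)) : (↑(preimageEquiv B hB x) : α) = ↑(↑x : T) := rfl

lemma iso_edge_ncard {α β : Type*} {K : SimpleGraph α} {L : SimpleGraph β} (e : K ≃g L) :
    K.edgeSet.ncard = L.edgeSet.ncard := by
  rw [← Nat.card_coe_set_eq, ← Nat.card_coe_set_eq]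
  exact Nat.card_congr e.mapEdgeSet

lemma swap_adj_key {α : Type*} [DecidableEq α] (G : SimpleGraph α) {a b : α}
    (h : ∀ z, G.Adj a z ↔ G.Adj b z) (x y : α) (hxy : G.Adj x y) :
    G.Adj (Equiv.swap a b x) (Equiv.swap a b y) := by
  have h' : ∀ z, G.Adj z a ↔ G.Adj z b := fun z => by
    rw [G.adj_comm z a, G.adj_comm z b]; exact h z
  simp only [Equiv.swap_apply_def]
  split_ifs <;> subst_vars <;>
    first
      | exact hxy
      | exact (h _).1 hxy
      | exact (h' _).1 hxy
      | exact (h _).2 hxy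
      | exact (h' _).2 hxy
      | exact (h' _).1 ((h _).1 hxy)
      | exact (h' _).2 ((h _).2 hxy)
      | exact (h _).1 ((h' _).1 hxy)
      | exact (h _).2 ((h' _).2 hxy)
      | exact absurd hxy (G.loopless.irrefl _)
      | exact absurd ((h _).1 hxy) (G.loopless.irrefl _)
      | exact absurd ((h' _).1 hxy) (G.loopless.irrefl _)

lemma swap_adj_iff {α : Type*} [DecidableEq α] (G : SimpleGraph α) {a b : α}
    (h : ∀ z, G.Adj a z ↔ G.Adj b z) (x y : α) :
    G.Adj (Equiv.swap a b x) (Equiv.swap a b y) ↔ G.Adj x y := by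
  constructor
  · intro hx
    have := swap_adj_key G h _ _ hx
    simpa using this
  · exact swap_adj_key G h x y

theorem stmt_5 {V W : Type*} [Fintype V] [Fintype W]
    (G : SimpleGraph V) (F : SimpleGraph W) (k : ℕ)
    (v : Fin (Fintype.card W + k + 1) → V) (hinj : Function.Injective v)
    (htwins : ∀ i j, i ≠ j → G.neighborSet (v i) = G.neighborSet (v j)) :
    (∃ H ≤ G, SatisfiesClosure G H F ∧ k ≤ H.edgeSet.ncard) ↔
    (∃ H' ≤ G.induce {x | x ≠ v (Fin.last (Fintype.card W + k))},
      SatisfiesClosure (G.induce {x | x ≠ v (Fin.last (Fintype.card W + k))}) H' F ∧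
        k ≤ H'.edgeSet.ncard) := by
  classical
  set vl := v (Fin.last (Fintype.card W + k)) with hvl
  set V' : Set V := {x | x ≠ vl} with hV'
  -- basic twin facts
  have hA : ∀ i j (x : V), G.Adj (v i) x ↔ G.Adj (v j) x := by
    intro i j x
    rcases eq_or_ne i j with rfl | hij
    · rfl
    · have := htwins i j hij
      rw [Set.ext_iff] at this
      simpa [mem_neighborSet] using this x
  have hnadj : ∀ i j, ¬ G.Adj (v i) (v j) := by
    intro i j hadj
    exact G.loopless.irrefl _ ((hA i j (v j)).1 hadj)
  -- the image of a subset of V' under coercion, with the two transfer isomorphisms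
  have coe_iso : ∀ (K : SimpleGraph V) (S' : Set V'),
      (K.induce V').induce S' ≃g K.induce (Subtype.val '' S') := by
    intro K S'
    exact induceIsoInduce (Equiv.Set.image _ S' Subtype.val_injective)
      (by intro x y; simp [Equiv.Set.image, Equiv.Set.imageOfInjOn])
  -- restriction step used by the forward direction
  have REST : ∀ H₂ : SimpleGraph V, H₂ ≤ G → SatisfiesClosure G H₂ F →
      k ≤ (H₂.induce V').edgeSet.ncard →
      (∃ H' ≤ G.induce V', SatisfiesClosure (G.induce V') H' F ∧ k ≤ H'.edgeSet.ncard) := by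
    intro H₂ hle₂ hcl₂ hk₂
    refine ⟨H₂.induce V', ?_, ?_, hk₂⟩
    · intro a b hab
      exact hle₂ hab
    · intro S' hS' hGS'
      obtain ⟨φ⟩ := hS'
      obtain ⟨ψ⟩ := hGS'
      exact hcl₂ (Subtype.val '' S') ⟨((coe_iso H₂ S').symm).trans φ⟩
        ⟨((coe_iso G S').symm).trans ψ⟩
  constructor
  · -- forward direction
    rintro ⟨H, hle, hcl, hk⟩
    by_cases hiso : ∃ i, ∀ x, ¬ H.Adj (v i) x
    · -- some twin is isolated in H: swap it with vl
      obtain ⟨i, hi⟩ := hiso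
      set σ : Equiv.Perm V := Equiv.swap (v i) vl with hσ
      have hσG : ∀ x y, G.Adj (σ x) (σ y) ↔ G.Adj x y := by
        intro x y; exact swap_adj_iff G (fun z => hA i (Fin.last (Fintype.card W + k)) z) x y
      set H₁ : SimpleGraph V := SimpleGraph.comap σ H with hH₁
      have h1adj : ∀ x y, H₁.Adj x y ↔ H.Adj (σ x) (σ y) := fun x y => Iff.rfl
      have h1le : H₁ ≤ G := by
        intro x y hxy
        exact (hσG x y).1 (hle hxy)
      have h1iso : ∀ x, ¬ H₁.Adj vl x := by
        intro x hx
        have : H.Adj (v i) (σ x) := by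
          have := (h1adj vl x).1 hx
          rwa [hσ, Equiv.swap_apply_right] at this
        exact hi (σ x) this
      have h1cl : SatisfiesClosure G H₁ F := by
        intro S hS hGS
        obtain ⟨φ⟩ := hS
        obtain ⟨ψ⟩ := hGS
        have eH : H₁.induce S ≃g H.induce (σ '' S) :=
          induceIsoInduce (Equiv.Set.image σ S σ.injective)
            (by intro x y; simp [Equiv.Set.image, Equiv.Set.imageOfInjOn, h1adj])
        have eG : G.induce S ≃g G.induce (σ '' S) :=
          induceIsoInduce (Equiv.Set.image σ S σ.injective)
            (by intro x y
                simp only [Equiv.Set.image, Equiv.Set.imageOfInjOn]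
                exact hσG x y)
        exact hcl (σ '' S) ⟨eH.symm.trans φ⟩ ⟨eG.symm.trans ψ⟩
      have h1card : H₁.edgeSet.ncard = H.edgeSet.ncard :=
        iso_edge_ncard ⟨σ, fun {a b} => Iff.rfl⟩
      refine REST H₁ h1le h1cl ?_
      have him : Sym2.map (Subtype.val : V' → V) '' (H₁.induce V').edgeSet = H₁.edgeSet := by
        apply Set.Subset.antisymm
        · rintro e ⟨e', he', rfl⟩
          induction e' using Sym2.ind with
          | _ a b => exact he'
        · intro e he
          induction e using Sym2.ind with
          | _ a b =>
            have ha : a ≠ vl := by rintro rfl; exact h1iso b he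
            have hb : b ≠ vl := by rintro rfl; exact h1iso a (H₁.adj_symm he)
            exact ⟨s(⟨a, ha⟩, ⟨b, hb⟩), he, rfl⟩
      have : (H₁.induce V').edgeSet.ncard = H₁.edgeSet.ncard := by
        rw [← him]
        exact (Set.ncard_image_of_injective _ (Sym2.map.injective Subtype.val_injective)).symm
      rw [this, h1card]; exact hk
    · -- every twin has an incident edge in H
      push_neg at hiso
      choose f hf using hiso
      refine REST H hle hcl ?_
      have hfne : ∀ i, f i ≠ vl := by
        intro i hfi
        have : G.Adj (v i) vl := hle (hfi ▸ hf i)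
        exact G.loopless.irrefl vl ((hA i (Fin.last (Fintype.card W + k)) vl).1 this)
      have hvne : ∀ j : Fin (Fintype.card W + k), v j.castSucc ≠ vl := by
        intro j hj
        exact absurd (hinj hj) (Fin.ne_last_of_lt (Fin.castSucc_lt_last j))
      set g : Fin (Fintype.card W + k) → Sym2 V' := fun j =>
        s(⟨v j.castSucc, hvne j⟩, ⟨f j.castSucc, hfne j.castSucc⟩) with hg
      have hgmem : ∀ j, g j ∈ (H.induce V').edgeSet := fun j => hf j.castSucc
      have hginj : Function.Injective (fun j : Fin (Fintype.card W + k) => (⟨g j, hgmem j⟩ : (H.induce V').edgeSet)) := by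
        intro j₁ j₂ hegal
        have : g j₁ = g j₂ := congrArg Subtype.val hegal
        rw [hg, Sym2.eq_iff] at this
        rcases this with ⟨h1, _⟩ | ⟨h1, h2⟩
        · have := hinj (congrArg Subtype.val h1)
          exact Fin.castSucc_injective _ this
        · exfalso
          have hv1 : v j₁.castSucc = f j₂.castSucc := congrArg Subtype.val h1
          have : H.Adj (v j₂.castSucc) (v j₁.castSucc) := hv1 ▸ hf j₂.castSucc
          exact hnadj _ _ (hle this)
      have hcount : Fintype.card W + k ≤ (H.induce V').edgeSet.ncard := by
        rw [← Nat.card_coe_set_eq]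
        calc Fintype.card W + k = Nat.card (Fin (Fintype.card W + k)) := by simp
          _ ≤ _ := Nat.card_le_card_of_injective _ hginj
      omega
  · -- backward direction
    rintro ⟨H', hle', hcl', hk'⟩
    set fe : V' ↪ V := Function.Embedding.subtype _ with hfe
    set H : SimpleGraph V := H'.map fe with hH
    have hHadj : ∀ (a b : V'), H.Adj ↑a ↑b ↔ H'.Adj a b := by
      intro a b
      exact SimpleGraph.map_adj_apply
    have hHle : H ≤ G := by
      rintro x y hxy
      rw [hH, SimpleGraph.map_adj] at hxy
      obtain ⟨a, b, hab, rfl, rfl⟩ := hxy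
      exact hle' hab
    have hvlH : ∀ x, ¬ H.Adj vl x := by
      intro x hx
      rw [hH, SimpleGraph.map_adj] at hx
      obtain ⟨a, b, hab, ha, rfl⟩ := hx
      exact a.2 ha
    have hedge : (H'.map fe).edgeSet = Sym2.map fe '' H'.edgeSet := by
      apply Set.Subset.antisymm
      · intro e he
        induction e using Sym2.ind with
        | _ a b =>
          rw [SimpleGraph.mem_edgeSet, SimpleGraph.map_adj] at he
          obtain ⟨a', b', hab, rfl, rfl⟩ := he
          exact ⟨s(a', b'), hab, rfl⟩
      · rintro e ⟨e', he', rfl⟩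
        induction e' using Sym2.ind with
        | _ a b =>
            rw [Sym2.map_pair_eq, SimpleGraph.mem_edgeSet]
            exact (SimpleGraph.map_adj _ _ _ _).2 ⟨a, b, he', rfl, rfl⟩
    have hkH : k ≤ H.edgeSet.ncard := by
      rw [hH, hedge, Set.ncard_image_of_injective _ (Sym2.map.injective fe.injective)]
      exact hk'
    refine ⟨H, hHle, ?_, hkH⟩
    intro S hS hGS
    obtain ⟨φ⟩ := hS
    obtain ⟨ψ⟩ := hGS
    by_cases hvS : vl ∈ S
    · -- contradiction: swap vl out of S
      have hHleS : H.induce S ≤ G.induce S := by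
        intro a b hab
        exact hHle hab
      have hEq : H.induce S = G.induce S := by
        rw [← SimpleGraph.edgeSet_inj]
        apply Set.eq_of_subset_of_ncard_le (SimpleGraph.edgeSet_mono hHleS)
        rw [iso_edge_ncard φ, iso_edge_ncard ψ]
      have hGvl : ∀ x : V, x ∈ S → ¬ G.Adj vl x := by
        intro x hx hGadj
        have : (G.induce S).Adj ⟨vl, hvS⟩ ⟨x, hx⟩ := hGadj
        rw [← hEq] at this
        exact hvlH x this
      have hGj : ∀ (j) (x : V), x ∈ S → ¬ G.Adj (v j) x := by
        intro j x hx h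
        exact hGvl x hx ((hA j (Fin.last (Fintype.card W + k)) x).1 h)
      -- find a twin outside S
      have hout : ∃ j : Fin (Fintype.card W + k), v j.castSucc ∉ S := by
        by_contra hall
        push_neg at hall
        have hallS : ∀ j : Fin (Fintype.card W + k + 1), v j ∈ S := fun j =>
          Fin.lastCases hvS (fun j => hall j) j
        have hinjS : Function.Injective (fun j : Fin (Fintype.card W + k + 1) => (⟨v j, hallS j⟩ : S)) := by
          intro a b hab
          exact hinj (congrArg Subtype.val hab)
        have h1 : Fintype.card W + k + 1 ≤ Nat.card S := by
          calc Fintype.card W + k + 1 = Nat.card (Fin (Fintype.card W + k + 1)) := by simp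
            _ ≤ _ := Nat.card_le_card_of_injective _ hinjS
        have h2 : Nat.card S = Fintype.card W := by
          rw [Nat.card_congr ψ.toEquiv, Nat.card_eq_fintype_card]
        omega
      obtain ⟨j, hj⟩ := hout
      set u := v j.castSucc with hu
      have huvl : u ≠ vl := fun h => absurd (hinj h) (Fin.ne_last_of_lt (Fin.castSucc_lt_last j))
      set σ : Equiv.Perm V := Equiv.swap vl u with hσ
      have hσG : ∀ x y, G.Adj (σ x) (σ y) ↔ G.Adj x y := by
        intro x y
        exact swap_adj_iff G (fun z => hA (Fin.last (Fintype.card W + k)) j.castSucc z) x y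
      set S'' : Set V := σ '' S with hS''
      have hmemS'' : ∀ x : V, x ∈ S'' → x = u ∨ (x ∈ S ∧ x ≠ vl) := by
        rintro x ⟨y, hy, rfl⟩
        rcases eq_or_ne y vl with rfl | hyvl
        · left; rw [hσ, Equiv.swap_apply_left]
        · right
          have hyu : y ≠ u := fun h => hj (h ▸ hy)
          rw [hσ, Equiv.swap_apply_of_ne_of_ne hyvl hyu]
          exact ⟨hy, hyvl⟩
      have hvlS'' : vl ∉ S'' := by
        intro hmem
        rcases hmemS'' vl hmem with h | h
        · exact huvl h.symm
        · exact h.2 rfl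
      -- G is "S-locally" unchanged by σ, and so is H
      have hGadjS'' : ∀ x : V, x ∈ S'' → ¬ G.Adj u x := by
        intro x hx hadj
        rcases hmemS'' x hx with rfl | ⟨hxS, _⟩
        · exact G.loopless.irrefl u hadj
        · exact hGj j.castSucc x hxS hadj
      have hHσ : ∀ x y : S, H.Adj (σ ↑x) (σ ↑y) ↔ H.Adj ↑x ↑y := by
        intro x y
        have key : ∀ z : V, z ∈ S → σ z = z ∨ (z = vl ∧ σ z = u) := by
          intro z hz
          rcases eq_or_ne z vl with rfl | hzvl
          · right; exact ⟨rfl, by rw [hσ, Equiv.swap_apply_left]⟩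
          · left
            have hzu : z ≠ u := fun h => hj (h ▸ hz)
            rw [hσ, Equiv.swap_apply_of_ne_of_ne hzvl hzu]
        have hHu : ∀ z : V, z ∈ S'' → ¬ H.Adj u z := fun z hz hadj => hGadjS'' z hz (hHle hadj)
        have hmap : ∀ z : S, σ ↑z ∈ S'' := fun z => ⟨↑z, z.2, rfl⟩
        rcases key ↑x x.2 with hx | ⟨hxvl, hxu⟩
        · rcases key ↑y y.2 with hy | ⟨hyvl, hyu⟩
          · rw [hx, hy]
          · apply iff_of_false
            · intro h
              refine hHu ↑x ?_ (H.adj_symm (by rwa [hx, hyu] at h))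
              rw [← hx]; exact hmap x
            · intro h
              exact hvlH ↑x (H.adj_symm (hyvl ▸ h))
        · apply iff_of_false
          · intro h
            rw [hxu] at h
            exact hHu _ (hmap y) h
          · intro h
            exact hvlH ↑y (hxvl ▸ h)
      have eG : G.induce S ≃g G.induce S'' :=
        induceIsoInduce (Equiv.Set.image σ S σ.injective)
          (by intro x y
              simp only [Equiv.Set.image, Equiv.Set.imageOfInjOn]
              exact hσG ↑x ↑y)
      have eH : H.induce S ≃g H.induce S'' :=
        induceIsoInduce (Equiv.Set.image σ S σ.injective)
          (by intro x y
              simp only [Equiv.Set.image, Equiv.Set.imageOfInjOn]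
              exact hHσ x y)
      -- lift S'' to a subset of V'
      have hsub'' : S'' ⊆ V' := by
        intro x hx
        rcases hmemS'' x hx with rfl | ⟨_, hxvl⟩
        · exact huvl
        · exact hxvl
      set S' : Set V' := Subtype.val ⁻¹' S'' with hS'
      have eH' : H'.induce S' ≃g H.induce S'' :=
        induceIsoInduce (preimageEquiv S'' hsub'')
          (by intro x y; rw [preimageEquiv_coe, preimageEquiv_coe]; exact hHadj _ _)
      have eG' : (G.induce V').induce S' ≃g G.induce S'' :=
        induceIsoInduce (preimageEquiv S'' hsub'') (fun x y => Iff.rfl)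
      exact hcl' S' ⟨eH'.trans (eH.symm.trans φ)⟩ ⟨eG'.trans (eG.symm.trans ψ)⟩
    · -- vl ∉ S: transfer directly
      have hSsub : S ⊆ V' := fun x hx h => hvS (h ▸ hx)
      set S' : Set V' := Subtype.val ⁻¹' S with hS'
      have eH' : H'.induce S' ≃g H.induce S :=
        induceIsoInduce (preimageEquiv S hSsub)
          (by intro x y; rw [preimageEquiv_coe, preimageEquiv_coe]; exact hHadj _ _)
      have eG' : (G.induce V').induce S' ≃g G.induce S :=
        induceIsoInduce (preimageEquiv S hSsub) (fun x y => Iff.rfl)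
      exact hcl' S' ⟨eH'.trans φ⟩ ⟨eG'.trans ψ⟩
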